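/- Let H be a graph, G an H-free graph with clique number w, and ε ∈ (0, w^{-1}]. Then for every submeasure μ on G, either G has a stable set S with μ(S) ≥ ε^{2|H|·log w}·μ(V(G)), or there are disjoint A, B ⊆ V(G) with μ(A), μ(B) ≥ ε^{2|H|·log w}·μ(V(G)) and μ(A ∩ N_G(v)) < ε·μ(A) for all v ∈ B. -/

import Mathlib

open SimpleGraph

/-- The chromatic number of the subgraph of `G` induced on `S`, as a natural number. -/
noncomputable def chiSet {V : Type*} (G : SimpleGraph V) (S : Set V) : ℕ :=
  (G.induce S).chromaticNumber.toNat

/-- The chromatic number of `G`, as a natural number. -/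
noncomputable def chi {V : Type*} (G : SimpleGraph V) : ℕ :=
  G.chromaticNumber.toNat

/-- `(A, B)` is an anticomplete pair: no edge of `G` joins `A` and `B`. -/
def Anticomplete {V : Type*} (G : SimpleGraph V) (A B : Set V) : Prop :=
  ∀ a ∈ A, ∀ b ∈ B, ¬ G.Adj a b

/-- `G` is `H`-free: no induced subgraph of `G` is isomorphic to `H`. -/
def FreeOf {V W : Type*} (G : SimpleGraph V) (H : SimpleGraph W) : Prop :=
  IsEmpty (H ↪g G)

/-- A submeasure on the vertex set: zero on `∅`, one on singletons, monotone, subadditive. -/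
structure IsSubmeasure {V : Type*} (μ : Set V → ℝ) : Prop where
  empty : μ ∅ = 0
  single : ∀ v : V, μ {v} = 1
  mono : ∀ ⦃X Y : Set V⦄, X ⊆ Y → μ X ≤ μ Y
  subadd : ∀ A B : Set V, μ (A ∪ B) ≤ μ A + μ B

namespace Stmt11Aux


variable {V : Type*} {μ : Set V → ℝ}

lemma mu_nonneg (hμ : IsSubmeasure μ) (X : Set V) : 0 ≤ μ X :=
  hμ.empty ▸ hμ.mono (Set.empty_subset X)

lemma mu_diff (hμ : IsSubmeasure μ) (X A : Set V) : μ X - μ A ≤ μ (X \ A) := by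
  have h1 : μ X ≤ μ (X \ A) + μ A := by
    have := hμ.subadd (X \ A) A
    have hsub : X ⊆ (X \ A) ∪ A := by
      intro x hx
      by_cases hxA : x ∈ A
      · exact Or.inr hxA
      · exact Or.inl ⟨hx, hxA⟩
    linarith [hμ.mono hsub]
  linarith

lemma mu_insert (hμ : IsSubmeasure μ) (A : Set V) (x : V) : μ (insert x A) ≤ μ A + 1 := by
  have : insert x A = A ∪ {x} := by
    ext y; simp [or_comm]
  rw [this]
  have := hμ.subadd A {x}
  rw [hμ.single x] at this
  linarith

lemma mu_biUnion {ι : Type*} (hμ : IsSubmeasure μ) (s : Finset ι) (F : ι → Set V) :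
    μ (⋃ i ∈ s, F i) ≤ ∑ i ∈ s, μ (F i) := by
  classical
  induction s using Finset.induction_on with
  | empty => simp [hμ.empty]
  | insert a s hx ih =>
    rw [Finset.sum_insert hx]
    have h1 : (⋃ i ∈ insert a s, F i) = F a ∪ ⋃ i ∈ s, F i := by
      simp [Set.biUnion_insert]
    rw [h1]
    calc μ (F a ∪ ⋃ i ∈ s, F i) ≤ μ (F a) + μ (⋃ i ∈ s, F i) := hμ.subadd _ _
      _ ≤ μ (F a) + ∑ i ∈ s, μ (F i) := by linarith

lemma mu_split [Fintype V] (hμ : IsSubmeasure μ) {s : ℝ} (hs : 0 < s) (X : Set V)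
    (hX : s ≤ μ X) : ∃ A : Set V, A ⊆ X ∧ s ≤ μ A ∧ μ A < s + 1 := by
  classical
  set T := X.toFinset.powerset.filter (fun A : Finset V => s ≤ μ ↑A) with hT
  have hXT : X.toFinset ∈ T := by
    simp only [hT, Finset.mem_filter, Finset.mem_powerset]
    exact ⟨le_refl _, by rwa [Set.coe_toFinset]⟩
  obtain ⟨A, hAT, hmin⟩ := T.exists_min_image Finset.card ⟨_, hXT⟩
  simp only [hT, Finset.mem_filter, Finset.mem_powerset] at hAT
  obtain ⟨hAX, hAs⟩ := hAT
  have hne : A.Nonempty := by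
    rcases Finset.eq_empty_or_nonempty A with h | h
    · exfalso; rw [h] at hAs; simp only [Finset.coe_empty] at hAs
      rw [hμ.empty] at hAs; linarith
    · exact h
  obtain ⟨a, ha⟩ := hne
  have herase : μ ↑(A.erase a) < s := by
    by_contra hcon
    push_neg at hcon
    have hmem : A.erase a ∈ T := by
      simp only [hT, Finset.mem_filter, Finset.mem_powerset]
      exact ⟨(A.erase_subset a).trans hAX, hcon⟩
    have := hmin _ hmem
    have hlt := Finset.card_erase_lt_of_mem ha
    omega
  have hcard : μ ↑A ≤ μ ↑(A.erase a) + 1 := by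
    have : (↑A : Set V) = insert a ↑(A.erase a) := by
      rw [← Finset.coe_insert, Finset.insert_erase ha]
    rw [this]
    exact mu_insert hμ _ _
  refine ⟨↑A, ?_, hAs, by linarith⟩
  intro x hx
  have := hAX hx
  rwa [Set.mem_toFinset] at this

lemma mu_parts [Fintype V] (hμ : IsSubmeasure μ) :
    ∀ (k : ℕ) (X : Set V) {s : ℝ}, 0 < s → (k : ℝ) * (s + 1) ≤ μ X →
    ∃ F : Fin k → Set V, (∀ i, F i ⊆ X) ∧ (∀ i, s ≤ μ (F i)) ∧
      (∀ i j, i ≠ j → Disjoint (F i) (F j)) := by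
  intro k
  induction k with
  | zero => intro X s hs _; exact ⟨Fin.elim0, fun i => i.elim0, fun i => i.elim0, fun i => i.elim0⟩
  | succ k ih =>
    intro X s hs hX
    have hsX : s ≤ μ X := by
      have : (1:ℝ) * (s+1) ≤ ((k:ℝ)+1) * (s+1) := by
        apply mul_le_mul_of_nonneg_right _ (by linarith)
        push_cast; linarith [Nat.cast_nonneg (α := ℝ) k]
      push_cast at hX
      nlinarith
    obtain ⟨A, hAX, hAs, hAub⟩ := mu_split hμ hs X hsX
    have hrem : (k : ℝ) * (s + 1) ≤ μ (X \ A) := by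
      have := mu_diff hμ X A
      push_cast at hX
      nlinarith
    obtain ⟨F', hF'X, hF's, hF'd⟩ := ih (X \ A) hs hrem
    refine ⟨Fin.cons A F', ?_, ?_, ?_⟩
    · intro i
      refine Fin.cases ?_ ?_ i
      · simpa using hAX
      · intro j; simpa using (hF'X j).trans (Set.diff_subset)
    · intro i
      refine Fin.cases ?_ ?_ i
      · simpa using hAs
      · intro j; simpa using hF's j
    · have hdA : ∀ j, Disjoint A (F' j) := fun j =>
        Set.disjoint_of_subset_right (hF'X j) Set.disjoint_sdiff_right
      intro i j hij
      induction i using Fin.cases with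
      | zero =>
        induction j using Fin.cases with
        | zero => exact (hij rfl).elim
        | succ j' => simpa using hdA j'
      | succ i' =>
        induction j using Fin.cases with
        | zero => simpa using (hdA i').symm
        | succ j' =>
          have : i' ≠ j' := fun h => hij (by rw [h])
          simpa using hF'd i' j' this


variable {W : Type*} [Fintype W] {H : SimpleGraph W} {G : SimpleGraph V}

lemma embed_aux (hμ : IsSubmeasure μ) (hfree : FreeOf G H)
    (n : ℕ) (hclique : ∀ s : Finset V, G.IsClique ↑s → s.card ≤ n)
    (ε t M₀ : ℝ) (hε0 : 0 < ε) (hε1 : ε ≤ 1) (ht0 : 0 < t)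
    (hεm : ((n / 2 : ℕ) + 1 : ℝ) * ε ≤ 5 / 6)
    (hG1 : 6 * t ≤ ε ^ (Fintype.card W - 1) * M₀)
    (hG2 : 2 * (Fintype.card W : ℝ) * t < ε ^ (Fintype.card W - 1) * M₀)
    (hC : ∀ X : Set V, t ≤ μ X →
      ∃ s : Finset V, ↑s ⊆ X ∧ G.IsClique ↑s ∧ s.card = n / 2 + 1)
    (hS : ∀ A B : Set V, Disjoint A B → t ≤ μ A → t ≤ μ B →
      ∃ v ∈ B, ε * μ A ≤ μ (A ∩ G.neighborSet v)) :
    ∀ (k : ℕ) (R : Finset W) (φ : W → V) (f : W → Set V), R.card = k →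
      (∀ u ∈ R, ε ^ (Fintype.card W - R.card) * M₀ ≤ μ (f u)) →
      (∀ u ∈ R, ∀ u' ∉ R, ∀ x ∈ f u, x ≠ φ u' ∧ (G.Adj x (φ u') ↔ H.Adj u u')) →
      (∀ u ∈ R, ∀ u' ∈ R, u ≠ u' → Disjoint (f u) (f u')) →
      (∀ u ∉ R, ∀ u' ∉ R, u ≠ u' → φ u ≠ φ u' ∧ (G.Adj (φ u) (φ u') ↔ H.Adj u u')) →
      False := by
  classical
  intro k
  induction k with
  | zero =>
    intro R φ f hk _ _ _ inv4
    rw [Finset.card_eq_zero] at hk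
    subst hk
    have inv4' : ∀ u u' : W, u ≠ u' → φ u ≠ φ u' ∧ (G.Adj (φ u) (φ u') ↔ H.Adj u u') := by
      intro u u' hne
      exact inv4 u (Finset.notMem_empty u) u' (Finset.notMem_empty u') hne
    have e : H ↪g G := by
      refine ⟨⟨φ, ?_⟩, ?_⟩
      · intro a b hab
        by_contra hne
        exact (inv4' a b hne).1 hab
      · intro a b
        by_cases hab : a = b
        · subst hab
          exact iff_of_false (G.irrefl) (H.irrefl)
        · exact (inv4' a b hab).2
    exact hfree.false e
  | succ k ih =>
    intro R φ f hk inv1 inv2 inv3 inv4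
    set h := Fintype.card W with hh
    have hRne : R.Nonempty := Finset.card_pos.mp (by omega)
    obtain ⟨u₀, hu₀⟩ := hRne
    have hkh : k + 1 ≤ h := hk ▸ Finset.card_le_univ R
    -- the big "mid-level" measure bound
    have hfu : ∀ u ∈ R, ε ^ (h - 1) * M₀ ≤ μ (f u) := by
      intro u hu
      refine le_trans ?_ (inv1 u hu)
      rw [hk]
      apply mul_le_mul_of_nonneg_right _ ?_
      · exact pow_le_pow_of_le_one (le_of_lt hε0) hε1 (by omega)
      · nlinarith [mu_nonneg hμ (f u), inv1 u hu,
          pow_pos hε0 (h - (k + 1)), pow_pos hε0 (h - 1)]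
    have hM₀ : 0 ≤ M₀ := by nlinarith [pow_pos hε0 (h - 1)]
    have htfu : ∀ u ∈ R, t ≤ μ (f u) := by
      intro u hu
      linarith [hfu u hu, hG1]
    -- bad sets
    set pd : W → Set V := fun u =>
      {x | x ∈ f u₀ ∧ μ (f u ∩ G.neighborSet x) < ε * μ (f u)} with hpd
    set ps : W → Set V := fun u =>
      {x | x ∈ f u₀ ∧ μ (f u \ G.neighborSet x) < ε * μ (f u)} with hps
    have claim_d : ∀ u ∈ R.erase u₀, μ (pd u) ≤ t := by
      intro u hu
      by_contra hcon
      push_neg at hcon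
      obtain ⟨hne, huR⟩ := Finset.mem_erase.mp hu
      have hdisj : Disjoint (f u) (pd u) := by
        refine Set.disjoint_of_subset_right ?_ (inv3 u huR u₀ hu₀ hne)
        intro x hx; exact hx.1
      obtain ⟨v, hv, hvle⟩ := hS (f u) (pd u) hdisj (htfu u huR) (le_of_lt hcon)
      exact absurd hvle (not_le.mpr (by linarith [hv.2]))
    have claim_s : ∀ u ∈ R.erase u₀, μ (ps u) ≤ t := by
      intro u hu
      by_contra hcon
      push_neg at hcon
      obtain ⟨hne, huR⟩ := Finset.mem_erase.mp hu
      obtain ⟨C, hCsub, hCcl, hCcard⟩ := hC (ps u) (le_of_lt hcon)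
      set A' : Set V := {x | x ∈ f u ∧ ∀ c ∈ C, G.Adj c x} with hA'
      have hcover : f u ⊆ A' ∪ ⋃ c ∈ C, (f u \ G.neighborSet c) := by
        intro x hx
        by_cases hall : ∀ c ∈ C, G.Adj c x
        · exact Or.inl ⟨hx, hall⟩
        · push_neg at hall
          obtain ⟨c, hc, hcx⟩ := hall
          exact Or.inr (Set.mem_biUnion hc ⟨hx, hcx⟩)
      have hsum : μ (⋃ c ∈ C, (f u \ G.neighborSet c)) ≤ (↑(n / 2) + 1) * (ε * μ (f u)) := by
        calc μ (⋃ c ∈ C, (f u \ G.neighborSet c)) ≤ ∑ c ∈ C, μ (f u \ G.neighborSet c) :=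
              mu_biUnion hμ C _
          _ ≤ ∑ _c ∈ C, (ε * μ (f u)) := by
              apply Finset.sum_le_sum
              intro c hc
              have := hCsub hc
              exact le_of_lt this.2
          _ = (↑(n / 2) + 1) * (ε * μ (f u)) := by
              rw [Finset.sum_const, hCcard]; push_cast; ring
      have hμA' : t ≤ μ A' := by
        have h1 : μ (f u) ≤ μ A' + μ (⋃ c ∈ C, (f u \ G.neighborSet c)) :=
          le_trans (hμ.mono hcover) (hμ.subadd _ _)
        have h2 : (↑(n / 2) + 1 : ℝ) * (ε * μ (f u)) ≤ (5 / 6) * μ (f u) := by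
          rw [← mul_assoc]
          apply mul_le_mul_of_nonneg_right hεm (mu_nonneg hμ (f u))
        have h3 : (1 / 6 : ℝ) * μ (f u) ≤ μ A' := by linarith
        have h4 : 6 * t ≤ μ (f u) := le_trans hG1 (hfu u huR)
        linarith
      obtain ⟨C', hC'sub, hC'cl, hC'card⟩ := hC A' hμA'
      have hdisjCC' : Disjoint C C' := by
        rw [Finset.disjoint_left]
        intro a haC haC'
        have ha1 : a ∈ f u₀ := (hCsub haC).1
        have ha2 : a ∈ f u := (hC'sub haC').1
        exact Set.disjoint_left.mp (inv3 u₀ hu₀ u huR (Ne.symm hne)) ha1 ha2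
      have hbig : G.IsClique ↑(C ∪ C') := by
        intro a ha b hb hab
        simp only [Finset.coe_union, Set.mem_union, Finset.mem_coe] at ha hb
        rcases ha with ha | ha <;> rcases hb with hb | hb
        · exact hCcl ha hb hab
        · exact (hC'sub hb).2 a ha
        · exact ((hC'sub ha).2 b hb).symm
        · exact hC'cl ha hb hab
      have hcard : (C ∪ C').card = 2 * (n / 2) + 2 := by
        rw [Finset.card_union_of_disjoint hdisjCC', hCcard, hC'card]; ring
      have := hclique (C ∪ C') hbig
      omega
    -- find a good vertex
    set Bbad : Set V := ⋃ u ∈ R.erase u₀, (pd u ∪ ps u) with hBbad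
    have hBbad_le : μ Bbad ≤ 2 * ((h : ℝ) - 1) * t := by
      have h1 : μ Bbad ≤ ∑ u ∈ R.erase u₀, μ (pd u ∪ ps u) := mu_biUnion hμ _ _
      have h2 : ∀ u ∈ R.erase u₀, μ (pd u ∪ ps u) ≤ 2 * t := by
        intro u hu
        calc μ (pd u ∪ ps u) ≤ μ (pd u) + μ (ps u) := hμ.subadd _ _
          _ ≤ 2 * t := by linarith [claim_d u hu, claim_s u hu]
      have h3 : ∑ u ∈ R.erase u₀, μ (pd u ∪ ps u) ≤ (R.erase u₀).card * (2 * t) := by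
        calc ∑ u ∈ R.erase u₀, μ (pd u ∪ ps u) ≤ ∑ _u ∈ R.erase u₀, (2*t) :=
              Finset.sum_le_sum h2
          _ = (R.erase u₀).card * (2 * t) := by rw [Finset.sum_const, nsmul_eq_mul]
      have hcard : (R.erase u₀).card = k := by
        rw [Finset.card_erase_of_mem hu₀, hk]; omega
      have hkle : (k : ℝ) ≤ (h : ℝ) - 1 := by
        have hk1 : k ≤ h - 1 := by omega
        have := (Nat.cast_le (α := ℝ)).mpr hk1
        rwa [Nat.cast_sub (by omega), Nat.cast_one] at this
      rw [hcard] at h3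
      nlinarith
    have hgood : (f u₀ \ Bbad).Nonempty := by
      rw [Set.nonempty_iff_ne_empty]
      intro hemp
      have h1 : μ (f u₀) - μ Bbad ≤ μ (f u₀ \ Bbad) := mu_diff hμ _ _
      rw [hemp, hμ.empty] at h1
      have h2 : ε ^ (h - 1) * M₀ ≤ μ (f u₀) := hfu u₀ hu₀
      nlinarith
    obtain ⟨v, hvf, hvB⟩ := hgood
    have hvprop : ∀ u ∈ R.erase u₀,
        ε * μ (f u) ≤ μ (f u ∩ G.neighborSet v) ∧ ε * μ (f u) ≤ μ (f u \ G.neighborSet v) := by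
      intro u hu
      have h1 : v ∉ pd u ∪ ps u := fun hc => hvB (Set.mem_biUnion hu hc)
      constructor
      · by_contra hcon
        exact h1 (Or.inl ⟨hvf, not_le.mp hcon⟩)
      · by_contra hcon
        exact h1 (Or.inr ⟨hvf, not_le.mp hcon⟩)
    -- update
    set R' := R.erase u₀ with hR'
    set φ' := Function.update φ u₀ v with hφ'
    set f' : W → Set V := fun u =>
      if H.Adj u u₀ then f u ∩ G.neighborSet v else f u \ G.neighborSet v with hf'
    have hf'sub : ∀ u, f' u ⊆ f u := by
      intro u
      simp only [hf']
      split
      · exact Set.inter_subset_left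
      · exact Set.diff_subset
    have hmemR : ∀ u' , u' ∉ R' → u' ≠ u₀ → u' ∉ R := by
      intro u' hu' hne huR
      exact hu' (Finset.mem_erase.mpr ⟨hne, huR⟩)
    refine ih R' φ' f' (by rw [hR', Finset.card_erase_of_mem hu₀, hk]; omega) ?_ ?_ ?_ ?_
    · -- inv1
      intro u hu
      have huR : u ∈ R := Finset.mem_of_mem_erase hu
      have hcard' : R'.card = k := by rw [hR', Finset.card_erase_of_mem hu₀, hk]; omega
      rw [hcard']
      have hstep : ε * μ (f u) ≤ μ (f' u) := by
        simp only [hf']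
        split
        · exact (hvprop u hu).1
        · exact (hvprop u hu).2
      have h1 : ε ^ (h - (k + 1)) * M₀ ≤ μ (f u) := by
        have := inv1 u huR; rwa [hk] at this
      have h2 : ε * (ε ^ (h - (k + 1)) * M₀) ≤ ε * μ (f u) :=
        mul_le_mul_of_nonneg_left h1 (le_of_lt hε0)
      have h3 : ε * (ε ^ (h - (k + 1)) * M₀) = ε ^ (h - k) * M₀ := by
        rw [← mul_assoc, ← pow_succ']
        congr 2
        omega
      rw [← h3]
      linarith
    · -- inv2
      intro u hu u' hu' x hx
      have huR : u ∈ R := Finset.mem_of_mem_erase hu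
      have hune : u ≠ u₀ := (Finset.mem_erase.mp hu).1
      by_cases hcase : u' = u₀
      · subst hcase
        have hφ'u₀ : φ' u' = v := Function.update_self u' v φ
        rw [hφ'u₀]
        have hxfu : x ∈ f u := hf'sub u hx
        constructor
        · intro hxv
          subst hxv
          exact Set.disjoint_left.mp (inv3 u huR u' hu₀ hune) hxfu hvf
        · simp only [hf'] at hx
          by_cases hadj : H.Adj u u'
          · rw [if_pos hadj] at hx
            exact iff_of_true (G.adj_symm hx.2) hadj
          · rw [if_neg hadj] at hx
            exact iff_of_false (fun hc => hx.2 (G.adj_symm hc)) hadj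
      · have hu'R : u' ∉ R := hmemR u' hu' hcase
        have hφ'u' : φ' u' = φ u' := Function.update_of_ne hcase v φ
        rw [hφ'u']
        exact inv2 u huR u' hu'R x (hf'sub u hx)
    · -- inv3
      intro u hu u' hu' hne
      exact Set.disjoint_of_subset (hf'sub u) (hf'sub u')
        (inv3 u (Finset.mem_of_mem_erase hu) u' (Finset.mem_of_mem_erase hu') hne)
    · -- inv4
      intro u hu u' hu' hne
      by_cases hcu : u = u₀ <;> by_cases hcu' : u' = u₀
      · exact absurd (hcu.trans hcu'.symm) hne
      · subst hcu
        have hu'R : u' ∉ R := hmemR u' hu' hcu'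
        rw [show φ' u = v from Function.update_self u v φ,
          show φ' u' = φ u' from Function.update_of_ne hcu' v φ]
        exact inv2 u hu₀ u' hu'R v hvf
      · subst hcu'
        have huR : u ∉ R := hmemR u hu hcu
        rw [show φ' u' = v from Function.update_self u' v φ,
          show φ' u = φ u from Function.update_of_ne hcu v φ]
        obtain ⟨hne2, hiff⟩ := inv2 u' hu₀ u huR v hvf
        exact ⟨hne2.symm, by rw [G.adj_comm, H.adj_comm]; exact hiff⟩
      · have huR : u ∉ R := hmemR u hu hcu
        have hu'R : u' ∉ R := hmemR u' hu' hcu'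
        rw [show φ' u = φ u from Function.update_of_ne hcu v φ,
          show φ' u' = φ u' from Function.update_of_ne hcu' v φ]
        exact inv4 u huR u' hu'R hne


lemma geom : ∀ h : ℕ, 2 ≤ h → 12 * h ≤ 3 ^ (h + 1) ∧ 4 * h ^ 2 < 3 ^ (h + 1) := by
  intro h
  induction h with
  | zero => omega
  | succ h ih =>
    intro hh
    by_cases h2 : 2 ≤ h
    · obtain ⟨ih1, ih2⟩ := ih h2
      have h3 : 3 ^ (h + 1 + 1) = 3 * 3 ^ (h + 1) := by ring
      have hp : 27 ≤ 3 ^ (h + 1) := by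
        calc (27:ℕ) = 3 ^ 3 := by norm_num
          _ ≤ 3 ^ (h + 1) := Nat.pow_le_pow_right (by norm_num) (by omega)
      constructor <;> nlinarith
    · have : h = 1 := by omega
      subst this; norm_num

set_option maxHeartbeats 2000000 in
theorem main {W : Type*} [Fintype W] (H : SimpleGraph W) (ε : ℝ) (hε0 : 0 < ε) :
    ∀ (n : ℕ) {V : Type*} [Fintype V] (G : SimpleGraph V), FreeOf G H →
    (∀ s : Finset V, G.IsClique ↑s → s.card ≤ n) → ε ≤ (n : ℝ)⁻¹ →
    ∀ μ : Set V → ℝ, IsSubmeasure μ →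
    (∃ S : Set V, (∀ u ∈ S, ∀ v ∈ S, ¬ G.Adj u v) ∧
        ε ^ (2 * (Fintype.card W : ℝ) * Real.logb 2 n) * μ Set.univ ≤ μ S) ∨
      (∃ A B : Set V, Disjoint A B ∧
        ε ^ (2 * (Fintype.card W : ℝ) * Real.logb 2 n) * μ Set.univ ≤ μ A ∧
        ε ^ (2 * (Fintype.card W : ℝ) * Real.logb 2 n) * μ Set.univ ≤ μ B ∧
        ∀ v ∈ B, μ (A ∩ G.neighborSet v) < ε * μ A) := by
  intro n
  induction n using Nat.strong_induction_on with
  | _ n ih =>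
  intro V _ G hfree hclique hεn μ hμ
  classical
  by_cases hV : IsEmpty V
  · left
    refine ⟨∅, by simp, ?_⟩
    have huniv : (Set.univ : Set V) = ∅ := Set.univ_eq_empty_iff.mpr hV
    rw [huniv, hμ.empty, mul_zero]
  have hVne : Nonempty V := not_isEmpty_iff.mp hV
  -- card W ≥ 2
  have hW2 : 2 ≤ Fintype.card W := by
    by_contra hlt
    push_neg at hlt
    haveI : Subsingleton W := Fintype.card_le_one_iff_subsingleton.mp (by omega)
    rcases isEmpty_or_nonempty W with hW | hW
    · exact hfree.false ⟨⟨fun a => isEmptyElim a, fun {a} => isEmptyElim a⟩,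
        fun {a b} => isEmptyElim a⟩
    · obtain ⟨v₀⟩ := hVne
      refine hfree.false ⟨⟨fun _ => v₀, fun a b _ => Subsingleton.elim a b⟩, ?_⟩
      intro a b
      refine iff_of_false (G.irrefl) ?_
      have hab : a = b := Subsingleton.elim a b
      subst hab
      exact H.irrefl
  -- dispatch n = 0
  rcases Nat.eq_zero_or_pos n with hn0 | hn0
  · subst hn0
    simp only [Nat.cast_zero, inv_zero] at hεn
    linarith
  rcases Nat.lt_or_ge n 2 with hn1 | hn2
  · -- n = 1
    have hn : n = 1 := by omega
    subst hn
    left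
    refine ⟨Set.univ, ?_, ?_⟩
    · intro u _ v _ hadj
      have hne : u ≠ v := G.ne_of_adj hadj
      have hcl : G.IsClique ↑({u, v} : Finset V) := by
        rw [Finset.coe_insert, Finset.coe_singleton]
        intro a ha b hb hneq
        rcases ha with rfl | ha <;> rcases hb with rfl | hb
        · exact absurd rfl hneq
        · rw [Set.mem_singleton_iff] at hb; subst hb; exact hadj
        · rw [Set.mem_singleton_iff] at ha; subst ha; exact hadj.symm
        · rw [Set.mem_singleton_iff] at ha hb; subst ha; subst hb; exact absurd rfl hneq
      have hcard : ({u, v} : Finset V).card = 2 := by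
        rw [Finset.card_insert_of_notMem (by simp [hne]), Finset.card_singleton]
      have := hclique _ hcl
      omega
    · rw [Nat.cast_one, Real.logb_one, mul_zero, Real.rpow_zero, one_mul]
  -- now n ≥ 2
  have hn0' : (0:ℝ) < n := by positivity
  have hn2' : (2:ℝ) ≤ n := by exact_mod_cast hn2
  have hεn' : ε * n ≤ 1 := by
    have := mul_le_mul_of_nonneg_right hεn (le_of_lt hn0')
    rwa [inv_mul_cancel₀ (ne_of_gt hn0')] at this
  have hεhalf : ε ≤ 1/2 := by nlinarith
  have hε1 : ε ≤ 1 := by linarith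
  set h := Fintype.card W with hhdef
  have hh2 : 2 ≤ h := hW2
  have hμ0 : 0 ≤ μ Set.univ := mu_nonneg hμ Set.univ
  -- c ≤ ε ^ (2h)
  have hlogn : 1 ≤ Real.logb 2 n := by
    have := Real.logb_le_logb_of_le (b := 2) (by norm_num) (by norm_num) hn2'
    rwa [Real.logb_self_eq_one (by norm_num)] at this
  have hcle : ε ^ (2 * (h : ℝ) * Real.logb 2 n) ≤ ε ^ (2 * h) := by
    rw [← Real.rpow_natCast ε (2 * h)]
    apply Real.rpow_le_rpow_of_exponent_ge hε0 hε1
    push_cast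
    nlinarith [Nat.cast_nonneg (α := ℝ) h]
  have hc0 : 0 < ε ^ (2 * (h : ℝ) * Real.logb 2 n) := Real.rpow_pos_of_pos hε0 _
  have hhalfpow : ε ^ (2 * h) ≤ (1/2 : ℝ) ^ (2 * h) := pow_le_pow_left₀ (le_of_lt hε0) hεhalf _
  -- small-measure case: a singleton works
  by_cases hsmall : μ Set.univ < 2 * h
  · obtain ⟨v₀⟩ := hVne
    left
    refine ⟨{v₀}, ?_, ?_⟩
    · intro u hu v hv
      rw [Set.mem_singleton_iff] at hu hv
      subst hu; subst hv
      exact G.irrefl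
    · rw [hμ.single v₀]
      have hpow2 : (2 * h : ℝ) < 2 ^ (2 * h) := by
        exact_mod_cast Nat.lt_two_pow_self (n := 2 * h)
      have h2p : (1/2:ℝ) ^ (2*h) * (2*h : ℝ) ≤ 1 := by
        rw [one_div, inv_pow]
        rw [inv_mul_le_iff₀ (by positivity)]
        push_cast
        linarith
      calc ε ^ (2 * (h : ℝ) * Real.logb 2 n) * μ Set.univ
          ≤ ε ^ (2*h) * μ Set.univ := by
            apply mul_le_mul_of_nonneg_right hcle hμ0
        _ ≤ (1/2:ℝ) ^ (2*h) * μ Set.univ := by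
            apply mul_le_mul_of_nonneg_right hhalfpow hμ0
        _ ≤ (1/2:ℝ) ^ (2*h) * (2*h : ℝ) := by
            apply mul_le_mul_of_nonneg_left (le_of_lt hsmall) (by positivity)
        _ ≤ 1 := h2p
  push_neg at hsmall
  have hμ4 : (4:ℝ) ≤ μ Set.univ := by
    have : (4:ℝ) ≤ 2 * h := by
      have : (2:ℝ) ≤ h := by exact_mod_cast hh2
      linarith
    linarith
  rcases Nat.lt_or_ge n 3 with hn3 | hn3
  · -- n = 2
    have hn : n = 2 := by omega
    subst hn
    have hceq : ε ^ (2 * (h:ℝ) * Real.logb 2 ((2:ℕ):ℝ)) = ε ^ (2*h) := by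
      rw [show ((2:ℕ):ℝ) = (2:ℝ) by norm_num, Real.logb_self_eq_one (by norm_num), mul_one,
        ← Real.rpow_natCast ε (2*h)]
      congr 1
      push_cast; ring
    by_cases hnbr : ∃ v : V, ε^(2*h) * μ Set.univ ≤ μ (G.neighborSet v)
    · obtain ⟨v, hv⟩ := hnbr
      left
      refine ⟨G.neighborSet v, ?_, ?_⟩
      · intro x hx y hy hadj
        rw [SimpleGraph.mem_neighborSet] at hx hy
        have hvx : v ≠ x := G.ne_of_adj hx
        have hvy : v ≠ y := G.ne_of_adj hy
        have hxy : x ≠ y := G.ne_of_adj hadj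
        have hcl : G.IsClique ↑({v, x, y} : Finset V) := by
          rw [Finset.coe_insert, Finset.coe_insert, Finset.coe_singleton]
          intro a ha b hb hne
          simp only [Set.mem_insert_iff, Set.mem_singleton_iff] at ha hb
          rcases ha with rfl | rfl | rfl <;> rcases hb with rfl | rfl | rfl <;>
            first
            | exact absurd rfl hne
            | exact hx | exact hy | exact hx.symm | exact hy.symm
            | exact hadj | exact hadj.symm
        have hcard : ({v, x, y} : Finset V).card = 3 := by
          rw [Finset.card_insert_of_notMem (by simp [hvx, hvy]),
            Finset.card_insert_of_notMem (by simp [hxy]), Finset.card_singleton]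
        have := hclique _ hcl
        omega
      · rw [hceq]; exact hv
    · push_neg at hnbr
      set s : ℝ := μ Set.univ / 2 - 1 with hsdef
      have hs : 0 < s := by rw [hsdef]; linarith
      obtain ⟨A, hAsub, hAlo, hAhi⟩ := mu_split hμ hs Set.univ (by rw [hsdef]; linarith)
      set B : Set V := Set.univ \ A with hBdef
      have hdisj : Disjoint A B := disjoint_sdiff_self_right
      have hBlo : μ Set.univ / 2 ≤ μ B := by
        have := mu_diff hμ Set.univ A
        rw [← hBdef] at this
        rw [hsdef] at hAhi
        linarith
      have hAq : μ Set.univ / 4 ≤ μ A := by rw [hsdef] at hAlo; linarith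
      have hBq : μ Set.univ / 4 ≤ μ B := by linarith
      have hquarter : ε^(2*h) ≤ 1/4 := by
        have h1 : ε^(2*h) ≤ (1/2:ℝ)^(2*h) := hhalfpow
        have h2 : ((1:ℝ)/2)^(2*h) ≤ (1/2:ℝ)^(2) :=
          pow_le_pow_of_le_one (by norm_num) (by norm_num) (by omega)
        have h3 : ((1:ℝ)/2)^(2:ℕ) = 1/4 := by norm_num
        linarith
      have hthresh : ε^(2*h) * μ Set.univ ≤ μ Set.univ / 4 := by nlinarith
      have hAth : ε ^ (2 * (h:ℝ) * Real.logb 2 ((2:ℕ):ℝ)) * μ Set.univ ≤ μ A := by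
        rw [hceq]; linarith
      have hBth : ε ^ (2 * (h:ℝ) * Real.logb 2 ((2:ℕ):ℝ)) * μ Set.univ ≤ μ B := by
        rw [hceq]; linarith
      right
      refine ⟨A, B, hdisj, hAth, hBth, ?_⟩
      intro v hv
      have h1 : μ (A ∩ G.neighborSet v) ≤ μ (G.neighborSet v) :=
        hμ.mono Set.inter_subset_right
      have h2 : μ (G.neighborSet v) < ε^(2*h) * μ Set.univ := hnbr v
      have hexp : ε^(2*h) = ε * ε^(2*h-1) := by
        rw [← pow_succ']
        congr 1
        omega
      have h3 : ε^(2*h-1) * μ Set.univ ≤ μ A := by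
        have hq : ε^(2*h-1) ≤ (1/2:ℝ)^(2*h-1) := pow_le_pow_left₀ hε0.le hεhalf _
        have hq2 : ((1:ℝ)/2)^(2*h-1) ≤ (1/2:ℝ)^(3:ℕ) :=
          pow_le_pow_of_le_one (by norm_num) (by norm_num) (by omega)
        have hq3 : ((1:ℝ)/2)^(3:ℕ) = 1/8 := by norm_num
        nlinarith
      calc μ (A ∩ G.neighborSet v) < ε^(2*h) * μ Set.univ := lt_of_le_of_lt h1 h2
        _ = ε * (ε^(2*h-1) * μ Set.univ) := by rw [hexp]; ring
        _ ≤ ε * μ A := mul_le_mul_of_nonneg_left h3 hε0.le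
  -- n ≥ 3 : main case
  have hn3' : (3:ℝ) ≤ n := by exact_mod_cast hn3
  set m := n / 2 with hmdef
  have hm1 : 1 ≤ m := by omega
  have hμu0 : (0:ℝ) < μ Set.univ := by linarith
  by_cases hX : ∃ X : Set V, ε^(2*h) * μ Set.univ ≤ μ X ∧
      ∀ s : Finset V, ↑s ⊆ X → G.IsClique ↑s → s.card ≤ m
  · -- recurse into X
    obtain ⟨X, hXμ, hXcl⟩ := hX
    haveI : Fintype ↥X := Fintype.ofFinite ↥X
    set μ' : Set ↥X → ℝ := fun S => μ (Subtype.val '' S) with hμ'def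
    have hμ' : IsSubmeasure μ' := by
      constructor
      · show μ (Subtype.val '' ∅) = 0
        rw [Set.image_empty]; exact hμ.empty
      · intro v
        show μ (Subtype.val '' {v}) = 1
        rw [Set.image_singleton]; exact hμ.single _
      · intro X' Y' hsub
        exact hμ.mono (Set.image_mono hsub)
      · intro A' B'
        show μ (Subtype.val '' (A' ∪ B')) ≤ _
        rw [Set.image_union]; exact hμ.subadd _ _
    have hfree' : FreeOf (G.induce X) H :=
      ⟨fun e => hfree.false ((SimpleGraph.Embedding.induce X).comp e)⟩
    have hclique' : ∀ s : Finset ↥X, (G.induce X).IsClique ↑s → s.card ≤ m := by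
      intro s hs
      have hmap := hXcl (s.map (Function.Embedding.subtype _)) ?_ ?_
      · rwa [Finset.card_map] at hmap
      · intro x hx
        simp only [Finset.coe_map, Set.mem_image, Function.Embedding.coe_subtype] at hx
        obtain ⟨y, _, rfl⟩ := hx
        exact y.2
      · intro a ha b hb hne
        simp only [Finset.coe_map, Set.mem_image, Function.Embedding.coe_subtype] at ha hb
        obtain ⟨a', ha', rfl⟩ := ha
        obtain ⟨b', hb', rfl⟩ := hb
        have hne' : a' ≠ b' := fun hc => hne (by rw [hc])
        exact hs ha' hb' hne'
    have hεm : ε ≤ (m:ℝ)⁻¹ := by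
      refine le_trans hεn (inv_anti₀ (by positivity) ?_)
      exact_mod_cast Nat.div_le_self n 2
    have hrec := ih m (by omega) (G.induce X) hfree' hclique' hεm μ' hμ'
    have huniv' : μ' Set.univ = μ X := by
      show μ (Subtype.val '' Set.univ) = μ X
      rw [Subtype.coe_image_univ]
    -- key exponent inequality
    have hm1' : (1:ℝ) ≤ m := by exact_mod_cast hm1
    have h2m' : 2*(m:ℝ) ≤ n := by exact_mod_cast (show 2*m ≤ n by omega)
    have hlogm : 1 + Real.logb 2 (m:ℝ) ≤ Real.logb 2 (n:ℝ) := by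
      have h1 : Real.logb 2 (2*(m:ℝ)) ≤ Real.logb 2 (n:ℝ) :=
        Real.logb_le_logb_of_le (by norm_num) (by positivity) h2m'
      rwa [Real.logb_mul (by norm_num) (by positivity),
        Real.logb_self_eq_one (by norm_num)] at h1
    have hkey : ε ^ (2*(h:ℝ)*Real.logb 2 (n:ℝ)) ≤ ε ^ (2*(h:ℝ)*Real.logb 2 (m:ℝ)) * ε^(2*h) := by
      rw [← Real.rpow_natCast ε (2*h), ← Real.rpow_add hε0]
      apply Real.rpow_le_rpow_of_exponent_ge hε0 hε1
      have hcast : ((2*h:ℕ):ℝ) = 2*(h:ℝ) := by push_cast; ring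
      rw [hcast]
      nlinarith [Nat.cast_nonneg (α := ℝ) h, hlogm]
    have hchain : ∀ Y : Set ↥X, ε ^ (2*(h:ℝ)*Real.logb 2 (m:ℝ)) * μ' Set.univ ≤ μ' Y →
        ε ^ (2*(h:ℝ)*Real.logb 2 (n:ℝ)) * μ Set.univ ≤ μ (Subtype.val '' Y) := by
      intro Y hY
      have hcm0 : (0:ℝ) ≤ ε ^ (2*(h:ℝ)*Real.logb 2 (m:ℝ)) :=
        (Real.rpow_pos_of_pos hε0 _).le
      have h1 : ε ^ (2*(h:ℝ)*Real.logb 2 (m:ℝ)) * (ε^(2*h) * μ Set.univ) ≤ μ' Y := by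
        refine le_trans ?_ hY
        rw [huniv']
        exact mul_le_mul_of_nonneg_left hXμ hcm0
      calc ε ^ (2*(h:ℝ)*Real.logb 2 (n:ℝ)) * μ Set.univ
          ≤ (ε ^ (2*(h:ℝ)*Real.logb 2 (m:ℝ)) * ε^(2*h)) * μ Set.univ :=
            mul_le_mul_of_nonneg_right hkey hμ0
        _ = ε ^ (2*(h:ℝ)*Real.logb 2 (m:ℝ)) * (ε^(2*h) * μ Set.univ) := by ring
        _ ≤ μ' Y := h1
        _ = μ (Subtype.val '' Y) := rfl
    rcases hrec with ⟨S', hS'st, hS'μ⟩ | ⟨A', B', hdisj', hA', hB', hsp'⟩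
    · left
      refine ⟨Subtype.val '' S', ?_, hchain S' hS'μ⟩
      rintro u ⟨u', hu', rfl⟩ v ⟨v', hv', rfl⟩ hadj
      exact hS'st u' hu' v' hv' hadj
    · right
      refine ⟨Subtype.val '' A', Subtype.val '' B',
        (Set.disjoint_image_iff Subtype.val_injective).mpr hdisj',
        hchain A' hA', hchain B' hB', ?_⟩
      rintro v ⟨v', hv', rfl⟩
      have himg : Subtype.val '' (A' ∩ (G.induce X).neighborSet v')
          = Subtype.val '' A' ∩ G.neighborSet ↑v' := by
        ext x
        constructor
        · rintro ⟨a, ⟨haA, haN⟩, rfl⟩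
          exact ⟨⟨a, haA, rfl⟩, haN⟩
        · rintro ⟨⟨a, haA, rfl⟩, hxN⟩
          exact ⟨a, ⟨haA, hxN⟩, rfl⟩
      calc μ (Subtype.val '' A' ∩ G.neighborSet ↑v')
          = μ' (A' ∩ (G.induce X).neighborSet v') := by rw [← himg]
        _ < ε * μ' A' := hsp' v' hv'
        _ = ε * μ (Subtype.val '' A') := rfl
  -- no such X : every heavy set contains an (m+1)-clique
  push_neg at hX
  have hC : ∀ X : Set V, ε^(2*h) * μ Set.univ ≤ μ X →
      ∃ s : Finset V, ↑s ⊆ X ∧ G.IsClique ↑s ∧ s.card = m + 1 := by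
    intro X hXμ
    obtain ⟨s, hsub, hcl, hcard⟩ := hX X hXμ
    obtain ⟨s', hs'sub, hs'card⟩ := Finset.exists_subset_card_eq (show m+1 ≤ s.card by omega)
    exact ⟨s', (Finset.coe_subset.mpr hs'sub).trans hsub,
      hcl.subset (Finset.coe_subset.mpr hs'sub), hs'card⟩
  by_cases hP : ∃ A B : Set V, Disjoint A B ∧ ε^(2*h) * μ Set.univ ≤ μ A ∧
      ε^(2*h) * μ Set.univ ≤ μ B ∧ ∀ v ∈ B, μ (A ∩ G.neighborSet v) < ε * μ A
  · obtain ⟨A, B, h1, h2, h3, h4⟩ := hP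
    right
    have hw : ε ^ (2*(h:ℝ)*Real.logb 2 (n:ℝ)) * μ Set.univ ≤ ε^(2*h) * μ Set.univ :=
      mul_le_mul_of_nonneg_right hcle hμ0
    exact ⟨A, B, h1, le_trans hw h2, le_trans hw h3, h4⟩
  push_neg at hP
  exfalso
  set t := ε^(2*h) * μ Set.univ with htdef
  have ht0 : 0 < t := mul_pos (pow_pos hε0 _) hμu0
  set M₀ : ℝ := μ Set.univ / (2*(h:ℝ)) with hM₀def
  have hh2' : (2:ℝ) ≤ (h:ℝ) := by exact_mod_cast hh2
  have hM₀0 : 0 < M₀ := by rw [hM₀def]; positivity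
  have hpart : (h:ℝ) * (M₀ + 1) ≤ μ Set.univ := by
    rw [hM₀def]
    have heq : (h:ℝ) * (μ Set.univ/(2*(h:ℝ)) + 1) = μ Set.univ/2 + h := by
      field_simp
    rw [heq]
    linarith [hsmall]
  obtain ⟨F, hFsub, hFμ, hFdisj⟩ := mu_parts hμ h Set.univ hM₀0 hpart
  set eqv := Fintype.equivFin W with heqv
  set f₀ : W → Set V := fun u => F (eqv u) with hf₀
  have hε3 : ε ≤ 1/3 := by nlinarith
  have hcube : ε^(h+1) ≤ (1/3:ℝ)^(h+1) := pow_le_pow_left₀ hε0.le hε3 _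
  obtain ⟨hg1, hg2⟩ := geom h hh2
  have hg1' : (12*(h:ℝ)) ≤ (3:ℝ)^(h+1) := by exact_mod_cast hg1
  have hg2' : (4*(h:ℝ)^2) < (3:ℝ)^(h+1) := by exact_mod_cast hg2
  have hthird : (1/3:ℝ)^(h+1) = 1/(3:ℝ)^(h+1) := by rw [div_pow, one_pow]
  have h3pos : (0:ℝ) < (3:ℝ)^(h+1) := by positivity
  have he2 : 12*(h:ℝ)*ε^(h+1) ≤ 1 := by
    have hstep : 12*(h:ℝ)*ε^(h+1) ≤ 12*(h:ℝ)*((1/3:ℝ)^(h+1)) :=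
      mul_le_mul_of_nonneg_left hcube (by positivity)
    have h2 : 12*(h:ℝ)*((1/3:ℝ)^(h+1)) ≤ 1 := by
      rw [hthird, mul_one_div, div_le_one h3pos]
      linarith
    linarith
  have he3 : 4*(h:ℝ)^2*ε^(h+1) < 1 := by
    have hb : 4*(h:ℝ)^2*((1/3:ℝ)^(h+1)) < 1 := by
      rw [hthird, mul_one_div, div_lt_one h3pos]
      linarith
    have hstep : 4*(h:ℝ)^2*ε^(h+1) ≤ 4*(h:ℝ)^2*((1/3:ℝ)^(h+1)) :=
      mul_le_mul_of_nonneg_left hcube (by positivity)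
    linarith
  have hepow : ε^(2*h) = ε^(h-1) * ε^(h+1) := by rw [← pow_add]; congr 1; omega
  have hpowpos : (0:ℝ) < ε^(h-1) := pow_pos hε0 _
  have hG1 : 6 * t ≤ ε ^ (h - 1) * M₀ := by
    rw [htdef, hM₀def, hepow]
    have key : 6 * ε^(h+1) ≤ 1/(2*(h:ℝ)) := by
      rw [le_div_iff₀ (by positivity)]
      nlinarith
    calc 6*(ε^(h-1)*ε^(h+1)*μ Set.univ) = (ε^(h-1)*μ Set.univ)*(6*ε^(h+1)) := by ring
      _ ≤ (ε^(h-1)*μ Set.univ)*(1/(2*(h:ℝ))) :=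
          mul_le_mul_of_nonneg_left key (mul_nonneg hpowpos.le hμ0)
      _ = ε^(h-1)*(μ Set.univ/(2*(h:ℝ))) := by ring
  have hG2 : 2*(h:ℝ)*t < ε^(h-1) * M₀ := by
    rw [htdef, hM₀def, hepow]
    have key : 2*(h:ℝ)*ε^(h+1) < 1/(2*(h:ℝ)) := by
      rw [lt_div_iff₀ (by positivity)]
      nlinarith
    calc 2*(h:ℝ)*(ε^(h-1)*ε^(h+1)*μ Set.univ)
        = (ε^(h-1)*μ Set.univ)*(2*(h:ℝ)*ε^(h+1)) := by ring
      _ < (ε^(h-1)*μ Set.univ)*(1/(2*(h:ℝ))) :=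
          mul_lt_mul_of_pos_left key (mul_pos hpowpos hμu0)
      _ = ε^(h-1)*(μ Set.univ/(2*(h:ℝ))) := by ring
  have hεm : ((n/2:ℕ)+1:ℝ)*ε ≤ 5/6 := by
    have hfl : ((n/2:ℕ):ℝ) ≤ (n:ℝ)/2 := Nat.cast_div_le
    have hq : ((n/2:ℕ):ℝ)*ε ≤ ((n:ℝ)*ε)/2 := by nlinarith
    have hq2 : (n:ℝ)*ε ≤ 1 := by linarith [hεn']
    linarith
  exact embed_aux hμ hfree n hclique ε t M₀ hε0 hε1 ht0 hεm hG1 hG2 hC hP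
    h Finset.univ (fun _ => Classical.arbitrary V) f₀ (by rw [Finset.card_univ])
    (by
      intro u _
      rw [Finset.card_univ]
      have : Fintype.card W - Fintype.card W = 0 := Nat.sub_self _
      rw [this, pow_zero, one_mul]
      exact hFμ _)
    (by intro u _ u' hu'; exact absurd (Finset.mem_univ u') hu')
    (by
      intro u _ u' _ hne
      exact hFdisj _ _ (fun hc => hne (eqv.injective hc)))
    (by intro u hu; exact absurd (Finset.mem_univ u) hu)



end Stmt11Aux

/-- Let `H` be a graph, `G` an `H`-free graph with clique number `w`, and
`ε ∈ (0, w⁻¹]`. For every submeasure `μ` on `G`, either `G` has a stable set `S` with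
`μ(S) ≥ ε^{2|H|·log w}·μ(V(G))` (binary log), or there are disjoint `A, B` with
`μ(A), μ(B) ≥ ε^{2|H|·log w}·μ(V(G))` and `μ(A ∩ N_G(v)) < ε·μ(A)` for all `v ∈ B`. -/

theorem stmt_11 {V W : Type*} [Fintype V] [Fintype W]
    (H : SimpleGraph W) (G : SimpleGraph V) (hfree : FreeOf G H)
    (w : ℕ) (hw : G.cliqueNum = w)
    (ε : ℝ) (hε0 : 0 < ε) (hε : ε ≤ (w : ℝ)⁻¹)
    (μ : Set V → ℝ) (hμ : IsSubmeasure μ) :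
    (∃ S : Set V, (∀ u ∈ S, ∀ v ∈ S, ¬ G.Adj u v) ∧
        ε ^ (2 * (Fintype.card W : ℝ) * Real.logb 2 w) * μ Set.univ ≤ μ S) ∨
      (∃ A B : Set V, Disjoint A B ∧
        ε ^ (2 * (Fintype.card W : ℝ) * Real.logb 2 w) * μ Set.univ ≤ μ A ∧
        ε ^ (2 * (Fintype.card W : ℝ) * Real.logb 2 w) * μ Set.univ ≤ μ B ∧
        ∀ v ∈ B, μ (A ∩ G.neighborSet v) < ε * μ A) := by
  classical
  have hclique : ∀ s : Finset V, G.IsClique ↑s → s.card ≤ w := by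
    intro s hs
    have hle := SimpleGraph.IsClique.card_le_cliqueNum (G := G) (tc := hs)
    rw [hw] at hle
    exact hle
  exact Stmt11Aux.main H ε hε0 w G hfree hclique hε μ hμ
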